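/- Let Z : ℝ → ℝ be continuous and 2π-periodic, N, M coprime positive integers, Y(η,ψ) = (1/N) ∑_{j=0}^{N−1} Z((M/N)(2πj+η)+ψ), and Q the autocorrelation of Z. Then for all φ, ψ: (1/(2π)) ∫₀^{2π} Z(Mθ + φ) · Y(Nθ, ψ) dθ = (1/N) ∑_{j=0}^{N−1} Q((M/N)·2πj + φ − ψ). -/

import Mathlib

open MeasureTheory Real Finset

private lemma dilate_int (f : ℝ → ℝ) (hf : Continuous f)
    (hp : Function.Periodic f (2 * π)) (M : ℕ) (hM : 0 < M) :
    ∫ θ in (0:ℝ)..(2 * π), f ((M : ℝ) * θ) = ∫ θ in (0:ℝ)..(2 * π), f θ := by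
  have hM0 : (M : ℝ) ≠ 0 := Nat.cast_ne_zero.mpr hM.ne'
  rw [intervalIntegral.integral_comp_mul_left f hM0]
  have h2 : (∫ x in ((M:ℝ) * 0)..((M:ℝ) * (2 * π)), f x)
      = (M : ℤ) • ∫ x in (0:ℝ)..(2 * π), f x := by
    have := hp.intervalIntegral_add_zsmul_eq (M : ℤ) 0
      (fun t₁ t₂ => hf.intervalIntegrable t₁ t₂)
    simpa [zsmul_eq_mul, mul_comm] using this
  rw [h2]
  simp only [zsmul_eq_mul, smul_eq_mul, Int.cast_natCast]
  field_simp

private lemma shift_int (f : ℝ → ℝ) (hp : Function.Periodic f (2 * π)) (c : ℝ) :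
    ∫ θ in (0:ℝ)..(2 * π), f (θ + c) = ∫ θ in (0:ℝ)..(2 * π), f θ := by
  rw [intervalIntegral.integral_comp_add_right]
  have := hp.intervalIntegral_add_eq c 0
  simpa [add_comm] using this

theorem interaction_with_Y_eq_V
    (Z : ℝ → ℝ) (hZ : Continuous Z) (hper : ∀ θ, Z (θ + 2 * π) = Z θ)
    (N M : ℕ) (hN : 0 < N) (hM : 0 < M) (hcop : Nat.Coprime N M)
    (Q : ℝ → ℝ)
    (hQ : ∀ φ, Q φ = (1 / (2 * π)) * ∫ θ in (0:ℝ)..(2 * π), Z (θ + φ) * Z θ)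
    (Y : ℝ → ℝ → ℝ)
    (hY : ∀ η ψ, Y η ψ = (1 / (N : ℝ)) *
      ∑ j ∈ Finset.range N, Z ((M / (N : ℝ)) * (2 * π * j + η) + ψ)) :
    ∀ φ ψ, (1 / (2 * π)) * ∫ θ in (0:ℝ)..(2 * π), Z (M * θ + φ) * Y (N * θ) ψ =
      (1 / (N : ℝ)) * ∑ j ∈ Finset.range N, Q ((M / (N : ℝ)) * (2 * π * j) + φ - ψ) := by
  intro φ ψ
  have hNR : (N : ℝ) ≠ 0 := Nat.cast_ne_zero.mpr hN.ne'
  have hπ : π ≠ 0 := Real.pi_ne_zero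
  have hZper : Function.Periodic Z (2 * π) := hper
  set c : ℕ → ℝ := fun j => (M / (N : ℝ)) * (2 * π * j) with hc
  -- Step 1: pointwise rewriting of the integrand
  have h1 : ∀ θ : ℝ, Z (M * θ + φ) * Y (N * θ) ψ
      = (1 / (N : ℝ)) * ∑ j ∈ Finset.range N,
          Z ((M : ℝ) * θ + φ) * Z ((M : ℝ) * θ + (c j + ψ)) := by
    intro θ
    have harg : ∀ j : ℕ, (M / (N : ℝ)) * (2 * π * j + (N : ℝ) * θ) + ψ
        = (M : ℝ) * θ + (c j + ψ) := by
      intro j; simp only [hc]; field_simp; ring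
    rw [hY]
    simp only [harg, Finset.mul_sum]
    exact Finset.sum_congr rfl fun j _ => by ring
  simp only [h1]
  -- Step 2: integral of sum
  rw [intervalIntegral.integral_const_mul]
  rw [intervalIntegral.integral_finset_sum (fun j _ => by
    apply Continuous.intervalIntegrable; fun_prop)]
  -- Step 3: each term equals 2π * Q (φ - (c j + ψ))
  have term : ∀ a : ℝ, (∫ θ in (0:ℝ)..(2 * π),
      Z ((M : ℝ) * θ + φ) * Z ((M : ℝ) * θ + a)) = 2 * π * Q (φ - a) := by
    intro a
    set f : ℝ → ℝ := fun u => Z (u + φ) * Z (u + a) with hf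
    have hfc : Continuous f := by fun_prop
    have hfp : Function.Periodic f (2 * π) := by
      intro x
      simp only [hf]
      rw [show x + 2 * π + φ = (x + φ) + 2 * π by ring,
        show x + 2 * π + a = (x + a) + 2 * π by ring, hper, hper]
    have hd : (∫ θ in (0:ℝ)..(2 * π), f ((M : ℝ) * θ))
        = ∫ θ in (0:ℝ)..(2 * π), f θ := dilate_int f hfc hfp M hM
    set g : ℝ → ℝ := fun u => Z (u + (φ - a)) * Z u with hg
    have hgp : Function.Periodic g (2 * π) := by
      intro x
      simp only [hg]
      rw [show x + 2 * π + (φ - a) = (x + (φ - a)) + 2 * π by ring, hper, hper]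
    have hgs : (∫ θ in (0:ℝ)..(2 * π), g (θ + a))
        = ∫ θ in (0:ℝ)..(2 * π), g θ := shift_int g hgp a
    have hfg : ∀ θ : ℝ, f θ = g (θ + a) := by
      intro θ; simp only [hf, hg]
      rw [show θ + a + (φ - a) = θ + φ by ring]
    calc (∫ θ in (0:ℝ)..(2 * π), Z ((M : ℝ) * θ + φ) * Z ((M : ℝ) * θ + a))
        = ∫ θ in (0:ℝ)..(2 * π), f ((M : ℝ) * θ) := rfl
      _ = ∫ θ in (0:ℝ)..(2 * π), f θ := hd
      _ = ∫ θ in (0:ℝ)..(2 * π), g (θ + a) := by simp only [hfg]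
      _ = ∫ θ in (0:ℝ)..(2 * π), g θ := hgs
      _ = 2 * π * Q (φ - a) := by
          rw [hQ (φ - a)]
          field_simp
          rfl
  simp only [term]
  -- Step 4: reindex the sum
  have hQper : Function.Periodic Q (2 * π) := by
    intro x
    rw [hQ, hQ]
    congr 1
    apply intervalIntegral.integral_congr
    intro θ _
    show Z (θ + (x + 2 * π)) * Z θ = Z (θ + x) * Z θ
    rw [show θ + (x + 2 * π) = (θ + x) + 2 * π by ring, hper]
  have hQM : ∀ x : ℝ, Q (x + 2 * π * (M : ℝ)) = Q x := by
    intro x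
    have := (hQper.nat_mul M) x
    rw [show x + 2 * π * (M : ℝ) = x + (M : ℝ) * (2 * π) by ring]
    exact this
  have hre : ∑ j ∈ Finset.range N, Q (φ - (c j + ψ))
      = ∑ j ∈ Finset.range N, Q (c j + φ - ψ) := by
    apply Finset.sum_nbij' (i := fun j => (N - j) % N) (j := fun j => (N - j) % N)
    · intro a _; exact Finset.mem_range.mpr (Nat.mod_lt _ hN)
    · intro a _; exact Finset.mem_range.mpr (Nat.mod_lt _ hN)
    · intro a ha
      rcases Nat.eq_zero_or_pos a with rfl | hapos
      · simp
      · have haN : a < N := Finset.mem_range.mp ha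
        have h1 : (N - a) % N = N - a := Nat.mod_eq_of_lt (by omega)
        rw [h1, Nat.sub_sub_self haN.le, Nat.mod_eq_of_lt haN]
    · intro a ha
      rcases Nat.eq_zero_or_pos a with rfl | hapos
      · simp
      · have haN : a < N := Finset.mem_range.mp ha
        have h1 : (N - a) % N = N - a := Nat.mod_eq_of_lt (by omega)
        rw [h1, Nat.sub_sub_self haN.le, Nat.mod_eq_of_lt haN]
    · intro a ha
      rcases Nat.eq_zero_or_pos a with rfl | hapos
      · simp only [Nat.sub_zero, Nat.mod_self, hc]
        norm_num
      · have haN : a < N := Finset.mem_range.mp ha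
        have h1 : (N - a) % N = N - a := Nat.mod_eq_of_lt (by omega)
        rw [h1]
        have hcast : ((N - a : ℕ) : ℝ) = (N : ℝ) - (a : ℝ) :=
          Nat.cast_sub haN.le
        have harg : c (N - a) + φ - ψ = (φ - (c a + ψ)) + 2 * π * (M : ℝ) := by
          simp only [hc, hcast]
          field_simp
          ring
        rw [harg, hQM]
  calc (1 / (2 * π)) * ((1 / (N : ℝ)) *
        ∑ j ∈ Finset.range N, 2 * π * Q (φ - (c j + ψ)))
      = (1 / (N : ℝ)) * ∑ j ∈ Finset.range N, Q (φ - (c j + ψ)) := by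
        rw [← Finset.mul_sum]
        field_simp
    _ = (1 / (N : ℝ)) * ∑ j ∈ Finset.range N, Q (c j + φ - ψ) := by rw [hre]
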